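/- In a finite binary-action supermodular game where the least and greatest Nash equilibria coincide (call the unique equilibrium x*), the singleton {x*} is globally best-response stable: from every configuration there is a best-response path to x*, and no best-response path of positive length leaves x* (i.e., x* is a strict equilibrium). -/

import Mathlib

variable {V : Type*} [Fintype V] [DecidableEq V]

/-- A configuration assigns each player an action in `{-1, +1}` (as integers). -/
def Conf (x : V → ℤ) : Prop := ∀ i, x i = 1 ∨ x i = -1

/-- Supermodularity (increasing differences) for a binary-action game with
utilities `u`. -/
def Supermodular (u : V → (V → ℤ) → ℝ) : Prop :=
  ∀ (i : V) (x y : V → ℤ), Conf x → Conf y → (∀ j, j ≠ i → y j ≤ x j) →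
    u i (Function.update y i 1) - u i (Function.update y i (-1)) ≤
      u i (Function.update x i 1) - u i (Function.update x i (-1))

/-- One step of an improvement path: a single player flips her action and
strictly increases her utility. -/
def ImpStep (u : V → (V → ℤ) → ℝ) (x y : V → ℤ) : Prop :=
  ∃ i : V, y = Function.update x i (-(x i)) ∧ u i x < u i y

/-- A monotone improvement step (the active player switches from -1 to +1). -/
def MonStep (u : V → (V → ℤ) → ℝ) (x y : V → ℤ) : Prop :=
  ImpStep u x y ∧ x ≤ y

/-- An anti-monotone improvement step (the active player switches from +1 to -1). -/
def AntiStep (u : V → (V → ℤ) → ℝ) (x y : V → ℤ) : Prop :=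
  ImpStep u x y ∧ y ≤ x

/-- `y` is reachable from `x` by an improvement path. -/
def ImpReach (u : V → (V → ℤ) → ℝ) : (V → ℤ) → (V → ℤ) → Prop :=
  Relation.ReflTransGen (ImpStep u)

/-- `y` is reachable from `x` by a monotone improvement path. -/
def MonReach (u : V → (V → ℤ) → ℝ) : (V → ℤ) → (V → ℤ) → Prop :=
  Relation.ReflTransGen (MonStep u)

/-- `y` is reachable from `x` by an anti-monotone improvement path. -/
def AntiReach (u : V → (V → ℤ) → ℝ) : (V → ℤ) → (V → ℤ) → Prop :=
  Relation.ReflTransGen (AntiStep u)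

/-- `x` is a (pure strategy Nash) equilibrium: no unilateral flip strictly
improves the deviator's utility. -/
def IsNash (u : V → (V → ℤ) → ℝ) (x : V → ℤ) : Prop :=
  ∀ i : V, u i (Function.update x i (-(x i))) ≤ u i x

open Classical in
/-- `fplus u x` is the componentwise supremum of the set of configurations
reachable from `x` by monotone improvement paths. -/
noncomputable def fplus (u : V → (V → ℤ) → ℝ) (x : V → ℤ) : V → ℤ :=
  fun i => if ∃ y, MonReach u x y ∧ y i = 1 then 1 else -1

open Classical in
/-- `fminus u x` is the componentwise infimum of the set of configurations
reachable from `x` by anti-monotone improvement paths. -/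
noncomputable def fminus (u : V → (V → ℤ) → ℝ) (x : V → ℤ) : V → ℤ :=
  fun i => if ∃ y, AntiReach u x y ∧ y i = -1 then -1 else 1

/-- One step of a best response path: a single player flips her action without
decreasing her utility. -/
def BRStep (u : V → (V → ℤ) → ℝ) (x y : V → ℤ) : Prop :=
  ∃ i : V, y = Function.update x i (-(x i)) ∧ u i x ≤ u i y

/-- `y` is reachable from `x` by a best response path. -/
def BRReach (u : V → (V → ℤ) → ℝ) : (V → ℤ) → (V → ℤ) → Prop :=
  Relation.ReflTransGen (BRStep u)

set_option linter.unusedSectionVars false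

section AuxiliaryLemmas

variable {u : V → (V → ℤ) → ℝ}

lemma conf_update {x : V → ℤ} (hx : Conf x) (i : V) {a : ℤ} (ha : a = 1 ∨ a = -1) :
    Conf (Function.update x i a) := by
  intro j
  rcases eq_or_ne j i with rfl | h
  · simpa using ha
  · rw [Function.update_of_ne h]; exact hx j

lemma monStep_flip {x y : V → ℤ} (hx : Conf x) (h : MonStep u x y) :
    ∃ i, x i = -1 ∧ y = Function.update x i 1 ∧ u i x < u i y := by
  obtain ⟨⟨i, rfl, hu⟩, hle⟩ := h
  rcases hx i with h1 | h1
  · exfalso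
    have := hle i
    rw [Function.update_self, h1] at this
    norm_num at this
  · exact ⟨i, h1, by rw [h1]; norm_num, hu⟩

lemma antiStep_flip {x y : V → ℤ} (hx : Conf x) (h : AntiStep u x y) :
    ∃ i, x i = 1 ∧ y = Function.update x i (-1) ∧ u i x < u i y := by
  obtain ⟨⟨i, rfl, hu⟩, hle⟩ := h
  rcases hx i with h1 | h1
  · exact ⟨i, h1, by rw [h1], hu⟩
  · exfalso
    have := hle i
    rw [Function.update_self, h1] at this
    norm_num at this

lemma monStep_measure {x y : V → ℤ} (hx : Conf x) (h : MonStep u x y) :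
    (Finset.univ.filter (fun i => y i = -1)).card <
      (Finset.univ.filter (fun i => x i = -1)).card := by
  obtain ⟨i, hxi, rfl, -⟩ := monStep_flip hx h
  have hsub : Finset.univ.filter (fun j => Function.update x i 1 j = -1)
      = (Finset.univ.filter (fun j => x j = -1)).erase i := by
    ext j
    rcases eq_or_ne j i with rfl | hj
    · simp
    · simp [Function.update_of_ne hj, hj]
  rw [hsub]
  exact Finset.card_erase_lt_of_mem (by simp [hxi])

lemma antiStep_measure {x y : V → ℤ} (hx : Conf x) (h : AntiStep u x y) :
    (Finset.univ.filter (fun i => y i = 1)).card <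
      (Finset.univ.filter (fun i => x i = 1)).card := by
  obtain ⟨i, hxi, rfl, -⟩ := antiStep_flip hx h
  have hsub : Finset.univ.filter (fun j => Function.update x i (-1) j = 1)
      = (Finset.univ.filter (fun j => x j = 1)).erase i := by
    ext j
    rcases eq_or_ne j i with rfl | hj
    · simp
    · simp [Function.update_of_ne hj, hj]
  rw [hsub]
  exact Finset.card_erase_lt_of_mem (by simp [hxi])

lemma exists_mon_max_aux :
    ∀ n (x : V → ℤ), (Finset.univ.filter (fun i => x i = -1)).card ≤ n → Conf x →
      ∃ z, MonReach u x z ∧ Conf z ∧ ∀ y, ¬ MonStep u z y := by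
  intro n
  induction n with
  | zero =>
    intro x hc hx
    refine ⟨x, Relation.ReflTransGen.refl, hx, fun y hy => ?_⟩
    have := monStep_measure hx hy
    omega
  | succ n ih =>
    intro x hc hx
    by_cases h : ∃ y, MonStep u x y
    · obtain ⟨y, hy⟩ := h
      obtain ⟨i, hxi, hyeq, -⟩ := monStep_flip hx hy
      have hyc : Conf y := by rw [hyeq]; exact conf_update hx i (Or.inl rfl)
      have hm := monStep_measure hx hy
      obtain ⟨z, hz1, hz2, hz3⟩ := ih y (by omega) hyc
      exact ⟨z, Relation.ReflTransGen.head hy hz1, hz2, hz3⟩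
    · exact ⟨x, Relation.ReflTransGen.refl, hx, fun y hy => h ⟨y, hy⟩⟩

lemma exists_anti_min_aux :
    ∀ n (x : V → ℤ), (Finset.univ.filter (fun i => x i = 1)).card ≤ n → Conf x →
      ∃ z, AntiReach u x z ∧ Conf z ∧ ∀ y, ¬ AntiStep u z y := by
  intro n
  induction n with
  | zero =>
    intro x hc hx
    refine ⟨x, Relation.ReflTransGen.refl, hx, fun y hy => ?_⟩
    have := antiStep_measure hx hy
    omega
  | succ n ih =>
    intro x hc hx
    by_cases h : ∃ y, AntiStep u x y
    · obtain ⟨y, hy⟩ := h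
      obtain ⟨i, hxi, hyeq, -⟩ := antiStep_flip hx hy
      have hyc : Conf y := by rw [hyeq]; exact conf_update hx i (Or.inr rfl)
      have hm := antiStep_measure hx hy
      obtain ⟨z, hz1, hz2, hz3⟩ := ih y (by omega) hyc
      exact ⟨z, Relation.ReflTransGen.head hy hz1, hz2, hz3⟩
    · exact ⟨x, Relation.ReflTransGen.refl, hx, fun y hy => h ⟨y, hy⟩⟩

/-- Invariant: all up-flips from `-1` are (weakly) unprofitable. -/
def PInv (u : V → (V → ℤ) → ℝ) (x : V → ℤ) : Prop :=
  Conf x ∧ ∀ i, x i = -1 → u i (Function.update x i 1) ≤ u i x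

/-- Invariant: all down-flips from `+1` are (weakly) unprofitable. -/
def QInv (u : V → (V → ℤ) → ℝ) (x : V → ℤ) : Prop :=
  Conf x ∧ ∀ i, x i = 1 → u i (Function.update x i (-1)) ≤ u i x

lemma pinv_antiStep (hsm : Supermodular u) {x y : V → ℤ}
    (hP : PInv u x) (h : AntiStep u x y) : PInv u y := by
  obtain ⟨hx, hPx⟩ := hP
  obtain ⟨j, hxj, hyeq, hu⟩ := antiStep_flip hx h
  have hyle : y ≤ x := h.2
  have hyc : Conf y := by rw [hyeq]; exact conf_update hx j (Or.inr rfl)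
  refine ⟨hyc, fun i hyi => ?_⟩
  rcases eq_or_ne i j with rfl | hij
  · have h1 : Function.update y i 1 = x := by
      rw [hyeq, Function.update_idem, ← hxj, Function.update_eq_self]
    rw [h1]; exact hu.le
  · have hxi : x i = -1 := by
      rw [hyeq, Function.update_of_ne hij] at hyi; exact hyi
    have hs := hsm i x y hx hyc (fun k _ => hyle k)
    have hx1 : Function.update x i (-1) = x := by rw [← hxi, Function.update_eq_self]
    have hy1 : Function.update y i (-1) = y := by rw [← hyi, Function.update_eq_self]
    rw [hx1, hy1] at hs
    have := hPx i hxi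
    linarith

lemma qinv_monStep (hsm : Supermodular u) {x y : V → ℤ}
    (hQ : QInv u x) (h : MonStep u x y) : QInv u y := by
  obtain ⟨hx, hQx⟩ := hQ
  obtain ⟨j, hxj, hyeq, hu⟩ := monStep_flip hx h
  have hyle : x ≤ y := h.2
  have hyc : Conf y := by rw [hyeq]; exact conf_update hx j (Or.inl rfl)
  refine ⟨hyc, fun i hyi => ?_⟩
  rcases eq_or_ne i j with rfl | hij
  · have h1 : Function.update y i (-1) = x := by
      rw [hyeq, Function.update_idem, ← hxj, Function.update_eq_self]
    rw [h1]; exact hu.le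
  · have hxi : x i = 1 := by
      rw [hyeq, Function.update_of_ne hij] at hyi; exact hyi
    have hs := hsm i y x hyc hx (fun k _ => hyle k)
    have hx1 : Function.update x i 1 = x := by rw [← hxi, Function.update_eq_self]
    have hy1 : Function.update y i 1 = y := by rw [← hyi, Function.update_eq_self]
    rw [hx1, hy1] at hs
    have := hQx i hxi
    linarith

lemma pinv_antiReach (hsm : Supermodular u) {x y : V → ℤ}
    (hP : PInv u x) (h : AntiReach u x y) : PInv u y := by
  induction h with
  | refl => exact hP
  | tail _ h2 ih => exact pinv_antiStep hsm ih h2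

lemma qinv_monReach (hsm : Supermodular u) {x y : V → ℤ}
    (hQ : QInv u x) (h : MonReach u x y) : QInv u y := by
  induction h with
  | refl => exact hQ
  | tail _ h2 ih => exact qinv_monStep hsm ih h2

lemma pinv_of_monMax {x : V → ℤ} (hx : Conf x) (h : ∀ y, ¬ MonStep u x y) :
    PInv u x := by
  refine ⟨hx, fun i hxi => ?_⟩
  by_contra hlt
  push_neg at hlt
  apply h (Function.update x i 1)
  refine ⟨⟨i, by rw [hxi]; norm_num, hlt⟩, ?_⟩
  intro k
  rcases eq_or_ne k i with rfl | hk
  · rw [Function.update_self, hxi]; norm_num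
  · rw [Function.update_of_ne hk]

lemma qinv_of_antiMin {x : V → ℤ} (hx : Conf x) (h : ∀ y, ¬ AntiStep u x y) :
    QInv u x := by
  refine ⟨hx, fun i hxi => ?_⟩
  by_contra hlt
  push_neg at hlt
  apply h (Function.update x i (-1))
  refine ⟨⟨i, by rw [hxi], hlt⟩, ?_⟩
  intro k
  rcases eq_or_ne k i with rfl | hk
  · rw [Function.update_self, hxi]; norm_num
  · rw [Function.update_of_ne hk]

lemma nash_of_inv {x : V → ℤ} (hP : PInv u x) (hQ : QInv u x) : IsNash u x := by
  intro i
  rcases hP.1 i with h1 | h1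
  · have e : -(x i) = -1 := by rw [h1]
    rw [e]; exact hQ.2 i h1
  · have e : -(x i) = 1 := by rw [h1]; ring
    rw [e]; exact hP.2 i h1

lemma antiReach_le {x y : V → ℤ} (h : AntiReach u x y) : y ≤ x := by
  induction h with
  | refl => exact le_refl x
  | tail _ h2 ih => exact le_trans h2.2 ih

lemma monReach_le {x y : V → ℤ} (h : MonReach u x y) : x ≤ y := by
  induction h with
  | refl => exact le_refl x
  | tail _ h2 ih => exact le_trans ih h2.2

lemma impStep_brStep {x y : V → ℤ} (h : ImpStep u x y) : BRStep u x y := by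
  obtain ⟨i, h1, h2⟩ := h
  exact ⟨i, h1, h2.le⟩

lemma brReach_of_monReach {x y : V → ℤ} (h : MonReach u x y) : BRReach u x y :=
  Relation.ReflTransGen.mono (fun _ _ hab => impStep_brStep hab.1) _ _ h

lemma brReach_of_antiReach {x y : V → ℤ} (h : AntiReach u x y) : BRReach u x y :=
  Relation.ReflTransGen.mono (fun _ _ hab => impStep_brStep hab.1) _ _ h

end AuxiliaryLemmas

/-- if the supermodular game has a unique Nash equilibrium `x*`
(least and greatest equilibria coincide), then `{x*}` is globally best-response
stable and `x*` is a strict equilibrium. -/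
theorem unique_nash_globally_BR_stable (u : V → (V → ℤ) → ℝ)
    (hsm : Supermodular u) (xs : V → ℤ) (hxs : Conf xs)
    (hnash : IsNash u xs)
    (huniq : ∀ x : V → ℤ, Conf x → IsNash u x → x = xs) :
    (∀ x : V → ℤ, Conf x → BRReach u x xs) ∧
    (∀ y : V → ℤ, BRReach u xs y → y = xs) ∧
    (∀ i : V, u i (Function.update xs i (-(xs i))) < u i xs) := by
  -- Part 1: from any configuration, reach xs by a best-response path.
  have hreach : ∀ x : V → ℤ, Conf x → BRReach u x xs := by
    intro x hx
    obtain ⟨z, hz1, hz2, hz3⟩ := exists_mon_max_aux (u := u) _ x le_rfl hx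
    have hPz : PInv u z := pinv_of_monMax hz2 hz3
    obtain ⟨w, hw1, hw2, hw3⟩ := exists_anti_min_aux (u := u) _ z le_rfl hz2
    have hPw : PInv u w := pinv_antiReach hsm hPz hw1
    have hQw : QInv u w := qinv_of_antiMin hw2 hw3
    have hwx : w = xs := huniq w hw2 (nash_of_inv hPw hQw)
    exact (brReach_of_monReach hz1).trans (hwx ▸ brReach_of_antiReach hw1)
  -- Part 3: xs is a strict equilibrium.
  have hstrict : ∀ i : V, u i (Function.update xs i (-(xs i))) < u i xs := by
    intro i
    rcases lt_or_eq_of_le (hnash i) with hlt | heq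
    · exact hlt
    exfalso
    rcases hxs i with h1 | h1
    · -- xs i = 1 : go down from y = update xs i (-1)
      set y := Function.update xs i (-1) with hy
      have hyc : Conf y := conf_update hxs i (Or.inr rfl)
      have hyle : y ≤ xs := by
        intro k
        rcases eq_or_ne k i with rfl | hk
        · rw [hy, Function.update_self, h1]; norm_num
        · rw [hy, Function.update_of_ne hk]
      have hyeqx : Function.update xs i (-(xs i)) = y := by rw [hy, h1]
      have hPy : PInv u y := by
        refine ⟨hyc, fun j hyj => ?_⟩
        rcases eq_or_ne j i with rfl | hij
        · have e1 : Function.update y j 1 = xs := by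
            rw [hy, Function.update_idem, ← h1, Function.update_eq_self]
          have e2 : u j y = u j xs := by rw [← hyeqx, heq]
          rw [e1, e2]
        · have hxj : xs j = -1 := by
            rw [hy, Function.update_of_ne hij] at hyj; exact hyj
          have hn : u j (Function.update xs j 1) ≤ u j xs := by
            have := hnash j
            rw [hxj] at this
            norm_num at this
            exact this
          have hs := hsm j xs y hxs hyc (fun k _ => hyle k)
          have hx1 : Function.update xs j (-1) = xs := by
            rw [← hxj, Function.update_eq_self]
          have hy1 : Function.update y j (-1) = y := by
            rw [← hyj, Function.update_eq_self]
          rw [hx1, hy1] at hs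
          linarith
      obtain ⟨w, hw1, hw2, hw3⟩ := exists_anti_min_aux (u := u) _ y le_rfl hyc
      have hPw : PInv u w := pinv_antiReach hsm hPy hw1
      have hQw : QInv u w := qinv_of_antiMin hw2 hw3
      have hwx : w = xs := huniq w hw2 (nash_of_inv hPw hQw)
      have hle := antiReach_le hw1 i
      rw [hwx] at hle
      rw [hy, Function.update_self] at hle
      rw [h1] at hle
      norm_num at hle
    · -- xs i = -1 : go up from y = update xs i 1
      set y := Function.update xs i 1 with hy
      have hyc : Conf y := conf_update hxs i (Or.inl rfl)
      have hyle : xs ≤ y := by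
        intro k
        rcases eq_or_ne k i with rfl | hk
        · rw [hy, Function.update_self, h1]; norm_num
        · rw [hy, Function.update_of_ne hk]
      have hyeqx : Function.update xs i (-(xs i)) = y := by rw [hy, h1]; norm_num
      have hQy : QInv u y := by
        refine ⟨hyc, fun j hyj => ?_⟩
        rcases eq_or_ne j i with rfl | hij
        · have e1 : Function.update y j (-1) = xs := by
            rw [hy, Function.update_idem, ← h1, Function.update_eq_self]
          have e2 : u j y = u j xs := by rw [← hyeqx, heq]
          rw [e1, e2]
        · have hxj : xs j = 1 := by
            rw [hy, Function.update_of_ne hij] at hyj; exact hyj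
          have hn : u j (Function.update xs j (-1)) ≤ u j xs := by
            have := hnash j
            rw [hxj] at this
            exact this
          have hs := hsm j y xs hyc hxs (fun k _ => hyle k)
          have hx1 : Function.update xs j 1 = xs := by
            rw [← hxj, Function.update_eq_self]
          have hy1 : Function.update y j 1 = y := by
            rw [← hyj, Function.update_eq_self]
          rw [hx1, hy1] at hs
          linarith
      obtain ⟨z, hz1, hz2, hz3⟩ := exists_mon_max_aux (u := u) _ y le_rfl hyc
      have hQz : QInv u z := qinv_monReach hsm hQy hz1
      have hPz : PInv u z := pinv_of_monMax hz2 hz3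
      have hzx : z = xs := huniq z hz2 (nash_of_inv hPz hQz)
      have hle := monReach_le hz1 i
      rw [hzx] at hle
      rw [hy, Function.update_self] at hle
      rw [h1] at hle
      norm_num at hle
  -- Part 2: no best-response path leaves xs.
  have hpart2 : ∀ y : V → ℤ, BRReach u xs y → y = xs := by
    intro y h
    induction h with
    | refl => rfl
    | tail _ h2 ih =>
      subst ih
      obtain ⟨i, rfl, hle⟩ := h2
      exact absurd hle (not_le.mpr (hstrict i))
  exact ⟨hreach, hpart2, hstrict⟩
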